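/- For every ρ ∈ (0,1) one has ∫₀^{2π} |Im((1 + ρe^{iα})/(1 − ρe^{iα}))| dα = 4·log((1+ρ)/(1−ρ)). -/

import Mathlib

open Complex Set

lemma schwarz_aux_D_pos (ρ : ℝ) (hρ0 : 0 < ρ) (hρ1 : ρ < 1) (α : ℝ) :
    0 < 1 - 2*ρ*Real.cos α + ρ^2 := by
  nlinarith [Real.cos_le_one α, Real.neg_one_le_cos α]

lemma schwarz_aux_im (ρ : ℝ) (α : ℝ)
    (hD : 0 < 1 - 2*ρ*Real.cos α + ρ^2) :
    (((1 + (ρ:ℂ) * Complex.exp ((α:ℂ) * Complex.I)) /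
      (1 - (ρ:ℂ) * Complex.exp ((α:ℂ) * Complex.I))).im)
      = 2*ρ*Real.sin α / (1 - 2*ρ*Real.cos α + ρ^2) := by
  have hs := Real.sin_sq_add_cos_sq α
  rw [Complex.div_im]
  simp only [Complex.exp_mul_I, Complex.normSq_apply, Complex.add_re, Complex.add_im,
    Complex.sub_re, Complex.sub_im, Complex.mul_re, Complex.mul_im, Complex.one_re,
    Complex.one_im, Complex.I_re, Complex.I_im, Complex.ofReal_re, Complex.ofReal_im,
    Complex.cos_ofReal_re, Complex.sin_ofReal_re, Complex.cos_ofReal_im, Complex.sin_ofReal_im,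
    mul_zero, zero_mul, mul_one, add_zero, zero_add, sub_zero, zero_sub, neg_zero, neg_neg]
  rw [div_sub_div_same, div_eq_div_iff ?_ hD.ne']
  · linear_combination (-2*ρ^3*Real.sin α) * hs
  · nlinarith [hs]

lemma schwarz_aux_deriv (ρ : ℝ) (hρ0 : 0 < ρ) (hρ1 : ρ < 1) (α : ℝ) :
    HasDerivAt (fun t => Real.log (1 - 2*ρ*Real.cos t + ρ^2))
      (2*ρ*Real.sin α / (1 - 2*ρ*Real.cos α + ρ^2)) α := by
  have hD := schwarz_aux_D_pos ρ hρ0 hρ1 α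
  have h1 : HasDerivAt (fun t => 1 - 2*ρ*Real.cos t + ρ^2) (2*ρ*Real.sin α) α := by
    have := (((Real.hasDerivAt_cos α).const_mul (2*ρ)).const_sub 1).add_const (ρ^2)
    rw [show (2*ρ*Real.sin α) = -(2*ρ*-Real.sin α) by ring]
    exact this
  exact h1.log hD.ne'

lemma schwarz_aux_cont (ρ : ℝ) (hρ0 : 0 < ρ) (hρ1 : ρ < 1) :
    Continuous (fun α : ℝ => 2*ρ*Real.sin α / (1 - 2*ρ*Real.cos α + ρ^2)) := by
  exact Continuous.div (by continuity) (by continuity)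
    (fun x => (schwarz_aux_D_pos ρ hρ0 hρ1 x).ne')

/-- `∫₀^{2π} |Im((1 + ρe^{iα})/(1 − ρe^{iα}))| dα = 4 log((1+ρ)/(1−ρ))` for `ρ ∈ (0,1)`. -/
theorem schwarz_kernel_im_integral (ρ : ℝ) (hρ : ρ ∈ Ioo (0:ℝ) 1) :
    (∫ α in (0:ℝ)..(2 * Real.pi),
        |(((1 + (ρ : ℂ) * Complex.exp ((α : ℂ) * Complex.I)) /
            (1 - (ρ : ℂ) * Complex.exp ((α : ℂ) * Complex.I))).im)|) =
      4 * Real.log ((1 + ρ) / (1 - ρ)) := by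
  obtain ⟨hρ0, hρ1⟩ := hρ
  have hDpos := schwarz_aux_D_pos ρ hρ0 hρ1
  have hpi := Real.pi_pos
  -- rewrite the integrand
  have hcongr : ∀ α : ℝ,
      |(((1 + (ρ:ℂ) * Complex.exp ((α:ℂ) * Complex.I)) /
        (1 - (ρ:ℂ) * Complex.exp ((α:ℂ) * Complex.I))).im)|
      = |2*ρ*Real.sin α| / (1 - 2*ρ*Real.cos α + ρ^2) := by
    intro α
    rw [schwarz_aux_im ρ α (hDpos α), abs_div, abs_of_pos (hDpos α)]
  simp_rw [hcongr]
  have habs : Continuous (fun α : ℝ => |2*ρ*Real.sin α| / (1 - 2*ρ*Real.cos α + ρ^2)) :=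
    Continuous.div (by continuity) (by continuity) (fun x => (hDpos x).ne')
  have hint : ∀ a b : ℝ, IntervalIntegrable
      (fun α : ℝ => 2*ρ*Real.sin α / (1 - 2*ρ*Real.cos α + ρ^2)) MeasureTheory.volume a b :=
    fun a b => (schwarz_aux_cont ρ hρ0 hρ1).intervalIntegrable a b
  rw [← intervalIntegral.integral_add_adjacent_intervals (b := Real.pi)
    (habs.intervalIntegrable 0 Real.pi) (habs.intervalIntegrable Real.pi (2*Real.pi))]
  have I1 : (∫ α in (0:ℝ)..Real.pi, |2*ρ*Real.sin α| / (1 - 2*ρ*Real.cos α + ρ^2))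
      = Real.log (1 - 2*ρ*Real.cos Real.pi + ρ^2) - Real.log (1 - 2*ρ*Real.cos 0 + ρ^2) := by
    rw [intervalIntegral.integral_congr (g := fun α => 2*ρ*Real.sin α / (1 - 2*ρ*Real.cos α + ρ^2))]
    · exact intervalIntegral.integral_eq_sub_of_hasDerivAt
        (fun x _ => schwarz_aux_deriv ρ hρ0 hρ1 x) (hint 0 Real.pi)
    · intro α hα
      rw [Set.uIcc_of_le hpi.le] at hα
      dsimp only
      have := Real.sin_nonneg_of_nonneg_of_le_pi hα.1 hα.2
      rw [_root_.abs_of_nonneg (by positivity)]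
  have I2 : (∫ α in Real.pi..(2*Real.pi), |2*ρ*Real.sin α| / (1 - 2*ρ*Real.cos α + ρ^2))
      = -(Real.log (1 - 2*ρ*Real.cos (2*Real.pi) + ρ^2) - Real.log (1 - 2*ρ*Real.cos Real.pi + ρ^2)) := by
    rw [intervalIntegral.integral_congr
      (g := fun α => -(2*ρ*Real.sin α / (1 - 2*ρ*Real.cos α + ρ^2)))]
    · rw [intervalIntegral.integral_neg]
      rw [intervalIntegral.integral_eq_sub_of_hasDerivAt
        (fun x _ => schwarz_aux_deriv ρ hρ0 hρ1 x) (hint Real.pi (2*Real.pi))]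
    · intro α hα
      rw [Set.uIcc_of_le (by linarith)] at hα
      have hsin : Real.sin α ≤ 0 := by
        have h1 : Real.sin (α - Real.pi) = -Real.sin α := Real.sin_sub_pi α
        have h2 : 0 ≤ Real.sin (α - Real.pi) :=
          Real.sin_nonneg_of_nonneg_of_le_pi (by linarith [hα.1]) (by linarith [hα.2])
        linarith
      have habs' : |2*ρ*Real.sin α| = -(2*ρ*Real.sin α) := by
        rw [abs_of_nonpos]; nlinarith
      simp only [habs']
      rw [neg_div]
  rw [I1, I2]
  have hc0 : (1 : ℝ) - 2*ρ*Real.cos 0 + ρ^2 = (1-ρ)^2 := by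
    rw [Real.cos_zero]; ring
  have hcpi : (1 : ℝ) - 2*ρ*Real.cos Real.pi + ρ^2 = (1+ρ)^2 := by
    rw [Real.cos_pi]; ring
  have hc2pi : (1 : ℝ) - 2*ρ*Real.cos (2*Real.pi) + ρ^2 = (1-ρ)^2 := by
    rw [Real.cos_two_pi]; ring
  rw [hc0, hcpi, hc2pi]
  have h1 : (0:ℝ) < 1 + ρ := by linarith
  have h2 : (0:ℝ) < 1 - ρ := by linarith
  rw [Real.log_div h1.ne' h2.ne', Real.log_pow, Real.log_pow]
  push_cast
  ring
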